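/- Let (a_i)_{0 ≤ i ≤ N} be a finite sequence of real numbers with a_0 = 0, |a_{i+1} − a_i| ≤ C for all i, and a_N ≥ (K + 2C)·N_0, where K, C > 0 and N_0 ≥ 1 is an integer. Then there exist indices 0 = m_0 < m_1 < ⋯ < m_{N_0} ≤ N such that a_{m_k} − a_{m_{k-1}} ≥ K for every k = 1, …, N_0. -/
import Mathlib


open Filter Topology

theorem pigeonhole_large_increments (a : ℕ → ℝ) (N N0 : ℕ) (C K : ℝ)
    (hC : 0 < C) (hK : 0 < K) (hN0 : 1 ≤ N0) (h0 : a 0 = 0)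
    (hstep : ∀ i < N, |a (i + 1) - a i| ≤ C)
    (hend : a N ≥ (K + 2 * C) * N0) :
    ∃ m : ℕ → ℕ, m 0 = 0 ∧ (∀ k < N0, m k < m (k + 1)) ∧ m N0 ≤ N ∧
      ∀ k < N0, a (m (k + 1)) - a (m k) ≥ K := by
  set c := K + C with hc
  have hcpos : 0 < c := by positivity
  set S : ℕ → Set ℕ := fun k => {i | (k : ℝ) * c ≤ a i} with hS
  have hNmem : ∀ k ≤ N0, N ∈ S k := by
    intro k hk
    have hk' : (k : ℝ) ≤ N0 := by exact_mod_cast hk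
    have hN0' : (0 : ℝ) ≤ N0 := Nat.cast_nonneg N0
    show (k : ℝ) * c ≤ a N
    nlinarith
  set m : ℕ → ℕ := fun k => sInf (S k) with hm
  have hmem : ∀ k ≤ N0, (k : ℝ) * c ≤ a (m k) :=
    fun k hk => Nat.sInf_mem ⟨N, hNmem k hk⟩
  have hmN : ∀ k ≤ N0, m k ≤ N := fun k hk => Nat.sInf_le (hNmem k hk)
  have hub : ∀ k ≤ N0, a (m k) < (k : ℝ) * c + C := by
    intro k hk
    rcases h : m k with _ | j
    · have : (0 : ℝ) ≤ (k : ℝ) * c := by positivity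
      rw [h0]; linarith
    · have hjlt : j < m k := by omega
      have hj : j ∉ S k := Nat.notMem_of_lt_sInf hjlt
      have hja : a j < (k : ℝ) * c := lt_of_not_ge hj
      have hjN : j < N := by have := hmN k hk; omega
      have := abs_le.mp (hstep j hjN)
      linarith [this.1, this.2]
  have hmono : ∀ k < N0, m k < m (k + 1) := by
    intro k hk
    have hk1 : k + 1 ≤ N0 := hk
    have hle : m k ≤ m (k + 1) := by
      apply Nat.sInf_le
      have h1 := hmem (k + 1) hk1
      show (k : ℝ) * c ≤ a (m (k + 1))
      push_cast at h1
      nlinarith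
    have hne : m k ≠ m (k + 1) := by
      intro heq
      have h1 := hmem (k + 1) hk1
      have h2 := hub k (le_of_lt hk)
      rw [← heq] at h1
      push_cast at h1
      nlinarith
    omega
  refine ⟨m, ?_, hmono, hmN N0 le_rfl, ?_⟩
  · apply Nat.sInf_eq_zero.mpr
    left
    simp only [hS, Set.mem_setOf_eq, h0, Nat.cast_zero, zero_mul, le_refl]
  · intro k hk
    have h1 := hmem (k + 1) hk
    have h2 := hub k (le_of_lt hk)
    push_cast at h1
    nlinarith
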